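/- Let a(x) = c₁·cosh(x) + c₂·sinh(x) with c₁, c₂ ∈ ℝ be nowhere vanishing on an interval I, and set φ(x) = arctan(1/a(x)). Then φ satisfies the ODE φ'' − 2·cot(φ)·(φ')² + cos(φ)·sin(φ) = 0 on I. -/

import Mathlib

open Real

theorem stmt_2 (c₁ c₂ : ℝ) (I : Set ℝ) (hI : IsOpen I)
    (a φ : ℝ → ℝ)
    (ha : a = fun x => c₁ * Real.cosh x + c₂ * Real.sinh x)
    (hne : ∀ x ∈ I, a x ≠ 0)
    (hφ : φ = fun x => Real.arctan (1 / a x)) :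
    ∀ x ∈ I,
      deriv (deriv φ) x
        - 2 * (Real.cos (φ x) / Real.sin (φ x)) * (deriv φ x)^2
        + Real.cos (φ x) * Real.sin (φ x) = 0 := by
  intro x hx
  set A : ℝ → ℝ := fun y => c₁ * Real.cosh y + c₂ * Real.sinh y with hA
  set B : ℝ → ℝ := fun y => c₁ * Real.sinh y + c₂ * Real.cosh y with hB
  have hane : ∀ y ∈ I, A y ≠ 0 := by
    intro y hy; have := hne y hy; rw [ha] at this; exact this
  have haA : ∀ y, a y = A y := by intro y; rw [ha]
  have hAd : ∀ y, HasDerivAt A (B y) y := by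
    intro y
    exact ((Real.hasDerivAt_cosh y).const_mul c₁).add
      ((Real.hasDerivAt_sinh y).const_mul c₂)
  have hBd : ∀ y, HasDerivAt B (A y) y := by
    intro y
    exact ((Real.hasDerivAt_sinh y).const_mul c₁).add
      ((Real.hasDerivAt_cosh y).const_mul c₂)
  have hD : ∀ y, (A y)^2 + 1 ≠ 0 := by intro y; positivity
  -- derivative of φ where A ≠ 0
  have hφ' : ∀ y, A y ≠ 0 → HasDerivAt φ (-(B y) / ((A y)^2 + 1)) y := by
    intro y hy
    have h1 : HasDerivAt (fun z => (A z)⁻¹) (-(B y) / (A y)^2) y := by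
      exact (hAd y).inv hy
    have h2 : HasDerivAt (fun z => Real.arctan ((A z)⁻¹))
        ((1 / (1 + ((A y)⁻¹)^2)) * (-(B y) / (A y)^2)) y :=
      (Real.hasDerivAt_arctan ((A y)⁻¹)).comp (h := fun z => (A z)⁻¹) y h1
    have heq : (1 / (1 + ((A y)⁻¹)^2)) * (-(B y) / (A y)^2)
        = -(B y) / ((A y)^2 + 1) := by
      field_simp
    rw [heq] at h2
    have : φ = fun z => Real.arctan ((A z)⁻¹) := by
      rw [hφ]; funext z; rw [haA z, one_div]
    rw [this]
    exact h2
  set F : ℝ → ℝ := fun y => -(B y) / ((A y)^2 + 1) with hF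
  have hmem : I ∈ nhds x := hI.mem_nhds hx
  have hEq : deriv φ =ᶠ[nhds x] F :=
    Filter.eventuallyEq_of_mem hmem (fun y hy => (hφ' y (hane y hy)).deriv)
  have hderiv2 : deriv (deriv φ) x = deriv F x := hEq.deriv_eq
  have hFd : HasDerivAt F
      ((-(A x) * ((A x)^2 + 1) - (-(B x)) * (2 * A x * B x)) / ((A x)^2 + 1)^2) x := by
    have hN : HasDerivAt (fun y => -(B y)) (-(A x)) x := (hBd x).neg
    have hDD : HasDerivAt (fun y => (A y)^2 + 1) (2 * A x * B x) x := by
      have h := ((hAd x).pow 2).add_const 1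
      simpa [mul_comm, mul_assoc] using h
    exact hN.div hDD (hD x)
  have hAx : A x ≠ 0 := hane x hx
  have hφx : φ x = Real.arctan (1 / A x) := by simp only [hφ, haA]
  have hs : Real.sqrt (1 + (1 / A x)^2) ≠ 0 := by positivity
  have hs2 : Real.sqrt (1 + (1 / A x)^2) ^ 2 = 1 + (1 / A x)^2 := by
    rw [sq_sqrt]; positivity
  have hcot : Real.cos (φ x) / Real.sin (φ x) = A x := by
    rw [hφx, Real.cos_arctan, Real.sin_arctan]
    field_simp
  have hcs : Real.cos (φ x) * Real.sin (φ x) = A x / ((A x)^2 + 1) := by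
    rw [hφx, Real.cos_arctan, Real.sin_arctan]
    rw [div_mul_div_comm, one_mul, ← sq, hs2]
    field_simp
  have hd1 : deriv φ x = -(B x) / ((A x)^2 + 1) := (hφ' x hAx).deriv
  rw [hderiv2, hFd.deriv, hcot, hcs, hd1]
  field_simp
  ring
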